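/- Termination of Algorithm 1 (Proposition 2(ii)): under the same SCA iteration hypotheses as Proposition 2(i) — (Q^0, W^0) ∈ S_Z, Cs bounded above on S_Z, and for every v ≥ 1, (Q^v, W^v, t^v) a maximizer of R(Q,t) over S_{Z,t}(Q^{v−1}, W^{v−1}) — for every ε > 0 and every integer v0 ≥ 1 there exists V ≥ v0 such that for all v ≥ V: Cs(Q^v, W^v) − Cs(Q^{v−v0}, W^{v−v0}) ≤ ε. In particular, the stopping criterion Cs(Q^v,W^v) − Cs(Q^{v−v0},W^{v−v0}) ≤ ε is eventually satisfied. -/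

import Mathlib

open Matrix Finset ComplexOrder

namespace SRM

/-- `log det` of a complex matrix: real logarithm of the real part of the determinant. -/
noncomputable def phik {m n : ℕ} (H P : Matrix (Fin m) (Fin n) ℂ)
    (Q W : Matrix (Fin n) (Fin n) ℂ) : ℝ :=
  Real.log ((1 + H * Q * Hᴴ + P * W * Pᴴ).det.re)

noncomputable def phiHat {m n : ℕ} (P : Matrix (Fin m) (Fin n) ℂ)
    (W : Matrix (Fin n) (Fin n) ℂ) : ℝ :=
  Real.log ((1 + P * W * Pᴴ).det.re)

/-- The `k`-th eavesdropper rate `C_k(Q,W)`. -/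
noncomputable def Ceav {m n : ℕ} (H P : Matrix (Fin m) (Fin n) ℂ)
    (Q W : Matrix (Fin n) (Fin n) ℂ) : ℝ :=
  phik H P Q W - phiHat P W

/-- The legitimate (Alice-Bob) rate `C_0(Q)`. -/
noncomputable def C0 {m n : ℕ} (H0 : Matrix (Fin m) (Fin n) ℂ)
    (Q : Matrix (Fin n) (Fin n) ℂ) : ℝ :=
  Real.log ((1 + H0 * Q * H0ᴴ).det.re)

/-- Gradient matrix `T_k(Q',W')`. -/
noncomputable def Tmat {m n : ℕ} (H P : Matrix (Fin m) (Fin n) ℂ)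
    (Q' W' : Matrix (Fin n) (Fin n) ℂ) : Matrix (Fin n) (Fin n) ℂ :=
  Hᴴ * (1 + H * Q' * Hᴴ + P * W' * Pᴴ)⁻¹ * H

/-- Gradient matrix `R_k(Q',W')`. -/
noncomputable def Rmat {m n : ℕ} (H P : Matrix (Fin m) (Fin n) ℂ)
    (Q' W' : Matrix (Fin n) (Fin n) ℂ) : Matrix (Fin n) (Fin n) ℂ :=
  Pᴴ * (1 + H * Q' * Hᴴ + P * W' * Pᴴ)⁻¹ * P

/-- Gradient of `φ̂_k` with respect to `W`. -/
noncomputable def Dmat {m n : ℕ} (P : Matrix (Fin m) (Fin n) ℂ)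
    (W : Matrix (Fin n) (Fin n) ℂ) : Matrix (Fin n) (Fin n) ℂ :=
  Pᴴ * (1 + P * W * Pᴴ)⁻¹ * P

/-- Gradient of `C_0` with respect to `Q`. -/
noncomputable def D0mat {m n : ℕ} (H0 : Matrix (Fin m) (Fin n) ℂ)
    (Q : Matrix (Fin n) (Fin n) ℂ) : Matrix (Fin n) (Fin n) ℂ :=
  H0ᴴ * (1 + H0 * Q * H0ᴴ)⁻¹ * H0

/-- First-order (linear) approximation `φ̄_k(Q,W | Q',W')` of `φ_k` around `(Q',W')`. -/
noncomputable def phiBar {m n : ℕ} (H P : Matrix (Fin m) (Fin n) ℂ)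
    (Q W Q' W' : Matrix (Fin n) (Fin n) ℂ) : ℝ :=
  phik H P Q' W' + ((Tmat H P Q' W' * (Q - Q')).trace).re
    + ((Rmat H P Q' W' * (W - W')).trace).re

/-- Convexified eavesdropper rate `C_{lk}(Q,W | Q',W')`. -/
noncomputable def Clk {m n : ℕ} (H P : Matrix (Fin m) (Fin n) ℂ)
    (Q W Q' W' : Matrix (Fin n) (Fin n) ℂ) : ℝ :=
  phiBar H P Q W Q' W' - phiHat P W

/-- Secrecy rate `C_s(Q,W) = C_0(Q) - max_k C_k(Q,W)`. -/
noncomputable def Cs {m0 n : ℕ} {K : Type*} [Fintype K] [Nonempty K] {mk : K → ℕ}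
    (H0 : Matrix (Fin m0) (Fin n) ℂ)
    (Hm Pm : (k : K) → Matrix (Fin (mk k)) (Fin n) ℂ)
    (Q W : Matrix (Fin n) (Fin n) ℂ) : ℝ :=
  C0 H0 Q - Finset.univ.sup' Finset.univ_nonempty (fun k => Ceav (Hm k) (Pm k) Q W)

/-- The feasible set `S_Z`. -/
def SZ {mg n : ℕ} (G : Matrix (Fin mg) (Fin n) ℂ) (V : Matrix (Fin n) (Fin n) ℂ)
    (Pmax Γ : ℝ) : Set (Matrix (Fin n) (Fin n) ℂ × Matrix (Fin n) (Fin n) ℂ) :=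
  {Z | Z.1.PosSemidef ∧ Z.2.PosSemidef ∧
    ((G * Z.1 * Gᴴ + G * V * Z.2 * Vᴴ * Gᴴ).trace).re ≤ Γ ∧
    ((Z.1 + Z.2).trace).re ≤ Pmax}

/-- The approximate feasible set `S_{Z,t}(Q',W')`. -/
def SZt {mg n : ℕ} {K : Type*} [Fintype K] {mk : K → ℕ}
    (G : Matrix (Fin mg) (Fin n) ℂ) (V : Matrix (Fin n) (Fin n) ℂ) (Pmax Γ : ℝ)
    (Hm Pm : (k : K) → Matrix (Fin (mk k)) (Fin n) ℂ)
    (Q' W' : Matrix (Fin n) (Fin n) ℂ) :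
    Set ((Matrix (Fin n) (Fin n) ℂ × Matrix (Fin n) (Fin n) ℂ) × ℝ) :=
  {x | x.1 ∈ SZ G V Pmax Γ ∧ ∀ k : K, Clk (Hm k) (Pm k) x.1.1 x.1.2 Q' W' ≤ x.2}

/-- The objective `R(Q,t) = C_0(Q) - t`. -/
noncomputable def Robj {m0 n : ℕ} (H0 : Matrix (Fin m0) (Fin n) ℂ)
    (Q : Matrix (Fin n) (Fin n) ℂ) (t : ℝ) : ℝ :=
  C0 H0 Q - t

end SRM
namespace SRM

lemma trace_eq_sum_eigen {N : ℕ} {C : Matrix (Fin N) (Fin N) ℂ} (hC : C.IsHermitian) :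
    C.trace = ∑ i, (hC.eigenvalues i : ℂ) := by
  conv_lhs => rw [hC.spectral_theorem]
  rw [Unitary.conjStarAlgAut_apply, Matrix.trace_mul_cycle,
    show (star hC.eigenvectorUnitary.1 : Matrix (Fin N) (Fin N) ℂ) * hC.eigenvectorUnitary.1 = 1
      from Matrix.mem_unitaryGroup_iff'.mp hC.eigenvectorUnitary.2]
  simp [Matrix.trace_diagonal]

lemma log_det_le_trace {N : ℕ} {C : Matrix (Fin N) (Fin N) ℂ} (hC : C.PosDef) :
    Real.log C.det.re ≤ C.trace.re - N := by
  have hev : ∀ i, 0 < hC.isHermitian.eigenvalues i := hC.eigenvalues_pos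
  have hdet : C.det.re = ∏ i, hC.isHermitian.eigenvalues i := by
    rw [hC.isHermitian.det_eq_prod_eigenvalues]
    norm_cast
  have htr : C.trace.re = ∑ i, hC.isHermitian.eigenvalues i := by
    rw [trace_eq_sum_eigen hC.isHermitian]
    norm_cast
  rw [hdet, htr, Real.log_prod (fun i _ => (hev i).ne')]
  calc ∑ i, Real.log (hC.isHermitian.eigenvalues i)
      ≤ ∑ i, (hC.isHermitian.eigenvalues i - 1) :=
        Finset.sum_le_sum fun i _ => Real.log_le_sub_one_of_pos (hev i)
    _ = _ := by rw [Finset.sum_sub_distrib]; simp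

lemma posDef_conj {N : ℕ} {B S : Matrix (Fin N) (Fin N) ℂ} (hB : B.PosDef)
    (hS : S.IsHermitian) (hSd : S.det ≠ 0) : (S * B * S).PosDef := by
  have hU : IsUnit S := (Matrix.isUnit_iff_isUnit_det S).mpr hSd.isUnit
  refine Matrix.posDef_iff_dotProduct_mulVec.mpr ⟨?_, fun x hx => ?_⟩
  · show (S * B * S)ᴴ = S * B * S
    rw [conjTranspose_mul, conjTranspose_mul, hS.eq, hB.isHermitian.eq, Matrix.mul_assoc]
  · have hx' : S *ᵥ x ≠ 0 := fun h =>
      hx ((Matrix.mulVec_injective_iff_isUnit.mpr hU).eq_iff' (by simp) |>.mp h)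
    have h2 := hB.dotProduct_mulVec_pos hx'
    have : star x ⬝ᵥ ((S * B * S) *ᵥ x) = star (S *ᵥ x) ⬝ᵥ (B *ᵥ (S *ᵥ x)) := by
      rw [star_mulVec, hS.eq, ← Matrix.mulVec_mulVec, ← Matrix.mulVec_mulVec,
        Matrix.dotProduct_mulVec]
    rw [this]
    exact h2

open scoped MatrixOrder in
lemma log_det_le_linear {N : ℕ} {A B : Matrix (Fin N) (Fin N) ℂ} (hA : A.PosDef) (hB : B.PosDef) :
    Real.log B.det.re ≤ Real.log A.det.re + ((A⁻¹ * (B - A)).trace).re := by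
  have hAi : A⁻¹.PosDef := hA.inv
  set S := CFC.sqrt A⁻¹ with hSdef
  have hSS : S * S = A⁻¹ := CFC.sqrt_mul_sqrt_self A⁻¹ hAi.posSemidef.nonneg
  have hSH : S.IsHermitian := (CFC.sqrt_nonneg A⁻¹).posSemidef.isHermitian
  have hdetAi : (0:ℂ) < A⁻¹.det := hAi.det_pos
  have hSd : S.det ≠ 0 := by
    intro h
    rw [← hSS, Matrix.det_mul, h, mul_zero] at hdetAi
    exact lt_irrefl _ hdetAi
  have hC : (S * B * S).PosDef := posDef_conj hB hSH hSd
  have h1 := log_det_le_trace hC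
  have hdetA : A.det = (A.det.re : ℂ) := by
    have := hA.det_pos
    rw [Complex.lt_def] at this
    exact Complex.ext rfl this.2.symm
  have hdetB : B.det = (B.det.re : ℂ) := by
    have := hB.det_pos
    rw [Complex.lt_def] at this
    exact Complex.ext rfl this.2.symm
  have ha : 0 < A.det.re := (Complex.lt_def.mp hA.det_pos).1
  have hb : 0 < B.det.re := (Complex.lt_def.mp hB.det_pos).1
  have hAdet0 : A.det ≠ 0 := hA.det_pos.ne'
  have hdetC : (S * B * S).det.re = (A.det.re)⁻¹ * B.det.re := by
    have : (S * B * S).det = A⁻¹.det * B.det := by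
      rw [Matrix.det_mul, Matrix.det_mul, ← hSS, Matrix.det_mul]
      ring
    rw [this, Matrix.det_nonsing_inv, Ring.inverse_eq_inv', hdetA, hdetB]
    norm_cast
  have htrC : (S * B * S).trace = (A⁻¹ * B).trace := by
    rw [Matrix.trace_mul_cycle, hSS]
  rw [hdetC, htrC, Real.log_mul (by positivity) hb.ne', Real.log_inv] at h1
  have htr2 : ((A⁻¹ * (B - A)).trace).re = ((A⁻¹ * B).trace).re - N := by
    rw [Matrix.mul_sub, Matrix.trace_sub, Matrix.nonsing_inv_mul A hAdet0.isUnit]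
    simp
  rw [htr2]
  linarith

lemma posdef_aux {m N : ℕ} (H P : Matrix (Fin m) (Fin N) ℂ)
    {Q W : Matrix (Fin N) (Fin N) ℂ} (hQ : Q.PosSemidef) (hW : W.PosSemidef) :
    (1 + H * Q * Hᴴ + P * W * Pᴴ).PosDef :=
  (Matrix.PosDef.add_posSemidef Matrix.PosDef.one
    (hQ.mul_mul_conjTranspose_same H)).add_posSemidef (hW.mul_mul_conjTranspose_same P)

lemma phik_le_phiBar {m N : ℕ} (H P : Matrix (Fin m) (Fin N) ℂ)
    {Q W Q' W' : Matrix (Fin N) (Fin N) ℂ}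
    (hQ : Q.PosSemidef) (hW : W.PosSemidef) (hQ' : Q'.PosSemidef) (hW' : W'.PosSemidef) :
    phik H P Q W ≤ phiBar H P Q W Q' W' := by
  set A := 1 + H * Q' * Hᴴ + P * W' * Pᴴ with hAdef
  set B := 1 + H * Q * Hᴴ + P * W * Pᴴ with hBdef
  have hA : A.PosDef := posdef_aux H P hQ' hW'
  have hB : B.PosDef := posdef_aux H P hQ hW
  have key := log_det_le_linear hA hB
  have hBA : B - A = H * (Q - Q') * Hᴴ + P * (W - W') * Pᴴ := by
    rw [hAdef, hBdef, Matrix.mul_sub, Matrix.sub_mul, Matrix.mul_sub, Matrix.sub_mul]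
    abel
  have htr : ((A⁻¹ * (B - A)).trace)
      = (Tmat H P Q' W' * (Q - Q')).trace + (Rmat H P Q' W' * (W - W')).trace := by
    rw [hBA, Matrix.mul_add, Matrix.trace_add]
    congr 1
    · rw [Tmat, ← hAdef]
      conv_rhs => rw [Matrix.trace_mul_cycle]
      simp only [Matrix.mul_assoc]
      conv_lhs => rw [Matrix.trace_mul_comm]
      simp only [Matrix.mul_assoc]
      conv_lhs => rw [Matrix.trace_mul_comm]
      simp only [Matrix.mul_assoc]
    · rw [Rmat, ← hAdef]
      conv_rhs => rw [Matrix.trace_mul_cycle]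
      simp only [Matrix.mul_assoc]
      conv_lhs => rw [Matrix.trace_mul_comm]
      simp only [Matrix.mul_assoc]
      conv_lhs => rw [Matrix.trace_mul_comm]
      simp only [Matrix.mul_assoc]
  rw [phiBar, phik, phik, ← hAdef, ← hBdef]
  rw [htr, Complex.add_re] at key
  linarith

lemma Ceav_le_Clk {m N : ℕ} (H P : Matrix (Fin m) (Fin N) ℂ)
    {Q W Q' W' : Matrix (Fin N) (Fin N) ℂ}
    (hQ : Q.PosSemidef) (hW : W.PosSemidef) (hQ' : Q'.PosSemidef) (hW' : W'.PosSemidef) :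
    Ceav H P Q W ≤ Clk H P Q W Q' W' :=
  sub_le_sub_right (phik_le_phiBar H P hQ hW hQ' hW') _

lemma Clk_self {m N : ℕ} (H P : Matrix (Fin m) (Fin N) ℂ)
    (Q' W' : Matrix (Fin N) (Fin N) ℂ) :
    Clk H P Q' W' Q' W' = Ceav H P Q' W' := by
  simp [Clk, Ceav, phiBar]


/-- Proposition 2(ii): under the SCA iteration, for every `ε > 0` and
every integer `v0 ≥ 1` the stopping criterion
`C_s(Q^v,W^v) - C_s(Q^{v-v0},W^{v-v0}) ≤ ε` is eventually satisfied. -/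
theorem sca_stopping_criterion {n mg m0 : ℕ} {K : Type*} [Fintype K] [Nonempty K]
    {mk : K → ℕ} (hn : 0 < n)
    (H0 : Matrix (Fin m0) (Fin n) ℂ)
    (G : Matrix (Fin mg) (Fin n) ℂ) (V : Matrix (Fin n) (Fin n) ℂ)
    (Pmax Γ : ℝ) (hPmax : 0 ≤ Pmax) (hΓ : 0 ≤ Γ)
    (Hm Pm : (k : K) → Matrix (Fin (mk k)) (Fin n) ℂ)
    (Qs Ws : ℕ → Matrix (Fin n) (Fin n) ℂ) (ts : ℕ → ℝ)
    (h0 : (Qs 0, Ws 0) ∈ SZ G V Pmax Γ)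
    (hbdd : BddAbove ((fun Z => Cs H0 Hm Pm Z.1 Z.2) '' SZ G V Pmax Γ))
    (hiter : ∀ v : ℕ, 1 ≤ v →
      ((Qs v, Ws v), ts v) ∈ SZt G V Pmax Γ Hm Pm (Qs (v - 1)) (Ws (v - 1)) ∧
      ∀ x ∈ SZt G V Pmax Γ Hm Pm (Qs (v - 1)) (Ws (v - 1)),
        Robj H0 x.1.1 x.2 ≤ Robj H0 (Qs v) (ts v))
    (ε : ℝ) (hε : 0 < ε) (v0 : ℕ) (hv0 : 1 ≤ v0) :
    ∃ V0 : ℕ, v0 ≤ V0 ∧ ∀ v : ℕ, V0 ≤ v →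
      Cs H0 Hm Pm (Qs v) (Ws v) - Cs H0 Hm Pm (Qs (v - v0)) (Ws (v - v0)) ≤ ε := by

  have hmem : ∀ v : ℕ, (Qs v, Ws v) ∈ SZ G V Pmax Γ := by
    intro v
    rcases Nat.eq_zero_or_pos v with h | h
    · rw [h]; exact h0
    · exact ((hiter v h).1).1
  set g : ℕ → ℝ := fun v => Cs H0 Hm Pm (Qs v) (Ws v) with hg
  have hstep : ∀ v : ℕ, g v ≤ g (v + 1) := by
    intro v
    obtain ⟨hfeas, hopt⟩ := hiter (v + 1) (Nat.le_add_left 1 v)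
    have hv1 : v + 1 - 1 = v := rfl
    rw [hv1] at hfeas hopt
    obtain ⟨hQv, hWv, -, -⟩ := hmem v
    obtain ⟨hQw, hWw, -, -⟩ := hmem (v + 1)
    have hfeas' : (((Qs v, Ws v),
        Finset.univ.sup' Finset.univ_nonempty (fun k => Ceav (Hm k) (Pm k) (Qs v) (Ws v))))
        ∈ SZt G V Pmax Γ Hm Pm (Qs v) (Ws v) := by
      refine ⟨hmem v, fun k => ?_⟩
      show Clk (Hm k) (Pm k) (Qs v) (Ws v) (Qs v) (Ws v) ≤ _
      rw [Clk_self]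
      exact Finset.le_sup' (fun k => Ceav (Hm k) (Pm k) (Qs v) (Ws v)) (Finset.mem_univ k)
    have h1 := hopt _ hfeas'
    simp only [Robj] at h1
    have h2 : Finset.univ.sup' Finset.univ_nonempty
        (fun k => Ceav (Hm k) (Pm k) (Qs (v + 1)) (Ws (v + 1))) ≤ ts (v + 1) :=
      Finset.sup'_le _ _ fun k _ =>
        le_trans (Ceav_le_Clk (Hm k) (Pm k) hQw hWw hQv hWv) (hfeas.2 k)
    simp only [hg, Cs]
    linarith
  have hmono : Monotone g := monotone_nat_of_le_succ hstep
  obtain ⟨M, hM⟩ := hbdd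
  have hgb : ∀ v, g v ≤ M := fun v => hM ⟨(Qs v, Ws v), hmem v, rfl⟩
  have hbg : BddAbove (Set.range g) := ⟨M, by rintro _ ⟨v, rfl⟩; exact hgb v⟩
  obtain ⟨N0, hN0⟩ : ∃ N0, (⨆ v, g v) - ε < g N0 :=
    exists_lt_of_lt_ciSup (by
      have : (⨆ v, g v) - ε < ⨆ v, g v := by linarith
      exact this)
  refine ⟨max v0 (N0 + v0), le_max_left _ _, fun v hv => ?_⟩
  have h1 : g v ≤ ⨆ v, g v := le_ciSup hbg v
  have h2 : g N0 ≤ g (v - v0) := hmono (by omega : N0 ≤ v - v0)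
  have : g v - g (v - v0) ≤ ε := by linarith
  exact this

end SRM
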